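/- Let z_ν = (q_ν, a_{1,ν},…,a_{d,ν}) ∈ ℤ^{d+1} be the best approximation vectors of α, fix ν, and define indices ν₁=ν, ν₂=ν+1, and inductively ν_j as the smallest μ ≥ ν_{j−1}+1 such that z_{ν₁},…,z_{ν_{j−1}},z_μ are linearly independent, obtaining d+1 linearly independent vectors z_{ν₁},…,z_{ν_{d+1}}. Let π_j be the real span of z_{ν₁},…,z_{ν_j}, let Γ_j = π_j ∩ ℤ^{d+1}, and let Δ_j be the j-dimensional fundamental volume of the lattice Γ_j. Then for every j = 1,…,d one has Δ_{j+1}/Δ_j ≤ 2√d · (q_{ν_{j+1}}/q_{ν_{j+1}−1}) · ξ_{ν_{j+1}−1}. -/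

import Mathlib

/-- Distance from a real number to the nearest integer. -/
noncomputable def dist01 (x : ℝ) : ℝ := |x - (round x : ℝ)|

/-- `max_{1 ≤ j ≤ d} ‖q α_j‖`. -/
noncomputable def simErr (d : ℕ) (α : Fin d → ℝ) (q : ℕ) : ℝ :=
  ⨆ j : Fin d, dist01 ((q : ℝ) * α j)

/-- `q` enumerates (in increasing order) all best approximation denominators of `α`. -/
def IsBestApproxDenoms (d : ℕ) (α : Fin d → ℝ) (q : ℕ → ℕ) : Prop :=
  StrictMono q ∧ (∀ ν, 0 < q ν) ∧
  (∀ ν, ∀ m : ℕ, 0 < m → m < q ν → simErr d α (q ν) < simErr d α m) ∧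
  (∀ m : ℕ, 0 < m →
    (∀ m' : ℕ, 0 < m' → m' < m → simErr d α m < simErr d α m') → ∃ ν, q ν = m)

/-- `z ν = (q ν, a_{1,ν}, …, a_{d,ν})` are the best approximation vectors of `α`:
the `q ν` are the best approximation denominators and the `a ν j` are nearest integers. -/
def IsSimBestApproxVecs (d : ℕ) (α : Fin d → ℝ) (q : ℕ → ℕ) (a : ℕ → Fin d → ℤ) : Prop :=
  IsBestApproxDenoms d α q ∧
  ∀ ν j, |(q ν : ℝ) * α j - (a ν j : ℝ)| = dist01 ((q ν : ℝ) * α j)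

/-- The `k`-dimensional volume of the parallelepiped spanned by `B`, i.e. the square root of
the Gram determinant; for a ℤ-basis of a rank-`k` lattice this is its fundamental volume. -/
noncomputable def gramVol {n k : ℕ} (B : Fin k → Fin n → ℝ) : ℝ :=
  Real.sqrt (Matrix.det (Matrix.of fun i i' : Fin k => ∑ l, B i l * B i' l))


open Matrix

noncomputable def gmat {m k : ℕ} (B : Fin k → Fin m → ℝ) : Matrix (Fin k) (Fin k) ℝ :=
  Matrix.of fun i i' : Fin k => ∑ l, B i l * B i' l

lemma gmat_eq {m k : ℕ} (B : Fin k → Fin m → ℝ) :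
    gmat B = Matrix.of B * (Matrix.of B)ᵀ := by
  ext i i'
  simp [gmat, Matrix.mul_apply]

lemma gmat_mul {m k k' : ℕ} (M : Matrix (Fin k') (Fin k) ℝ) (B : Fin k → Fin m → ℝ) :
    gmat (fun i l => ∑ p, M i p * B p l) = M * gmat B * Mᵀ := by
  have h : Matrix.of (fun i l => ∑ p, M i p * B p l) = M * Matrix.of B := by
    ext i l; simp [Matrix.mul_apply]
  rw [gmat_eq, h, gmat_eq, Matrix.transpose_mul]
  rw [← Matrix.mul_assoc, Matrix.mul_assoc M]

lemma gram_det_ne_zero_of_li {m k : ℕ} {v : Fin k → Fin m → ℝ}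
    (h : LinearIndependent ℝ v) : (gmat v).det ≠ 0 := by
  intro hdet
  obtain ⟨x, hx0, hx⟩ := Matrix.exists_vecMul_eq_zero_iff.mpr hdet
  have hxA : Matrix.vecMul x (Matrix.of v) = 0 := by
    have h2 : Matrix.vecMul x (gmat v) = 0 := hx
    rw [gmat_eq, ← Matrix.vecMul_vecMul] at h2
    have h3 : ∑ l, (Matrix.vecMul x (Matrix.of v)) l * (Matrix.vecMul x (Matrix.of v)) l = 0 := by
      have := congrFun h2
      -- (x ᵥ* (of v)) ᵥ* (of v)ᵀ = 0 ; pair with x again: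
      -- compute x ⬝ (that) = ∑ l (xA l)^2
      have h4 : ∑ i, x i * (Matrix.vecMul (Matrix.vecMul x (Matrix.of v)) (Matrix.of v)ᵀ) i = 0 := by
        rw [h2]; simp
      calc ∑ l, (Matrix.vecMul x (Matrix.of v)) l * (Matrix.vecMul x (Matrix.of v)) l
          = ∑ i, x i * (Matrix.vecMul (Matrix.vecMul x (Matrix.of v)) (Matrix.of v)ᵀ) i := by
            simp only [Matrix.vecMul, dotProduct, Matrix.transpose_apply, Matrix.of_apply,
              Finset.mul_sum, Finset.sum_mul]
            rw [Finset.sum_comm]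
            apply Finset.sum_congr rfl; intro l _
            apply Finset.sum_congr rfl; intro i _
            exact Finset.sum_congr rfl fun p _ => by ring
        _ = 0 := h4
    funext l
    have := Finset.sum_eq_zero_iff_of_nonneg (fun l _ => mul_self_nonneg _) |>.mp h3 l (Finset.mem_univ l)
    have := mul_self_eq_zero.mp this
    simpa using this
  apply hx0
  funext i
  have hiff := Fintype.linearIndependent_iff.mp h x
  have : ∑ i, x i • v i = 0 := by
    funext l
    have := congrFun hxA l
    simpa [Matrix.vecMul, dotProduct] using this
  exact hiff this i

lemma gram_step {m k : ℕ} (v : Fin (k+1) → Fin m → ℝ) :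
    ∃ r : Fin m → ℝ,
      (gmat v).det = (∑ l, r l ^ 2) * (gmat (fun i : Fin k => v i.castSucc)).det ∧
      ∀ t : Fin k → ℝ,
        ∑ l, r l ^ 2 ≤ ∑ l, (v (Fin.last k) l - ∑ i, t i * v i.castSucc l) ^ 2 := by
  classical
  set eqv := WithLp.linearEquiv 2 ℝ (Fin m → ℝ) with heqv
  have hinner : ∀ x y : Fin m → ℝ, (inner ℝ (eqv.symm x) (eqv.symm y) : ℝ) = ∑ l, x l * y l := by
    intro x y
    rw [PiLp.inner_apply]
    apply Finset.sum_congr rfl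
    intro l _
    simp [RCLike.inner_apply, heqv, WithLp.linearEquiv_symm_apply, PiLp.toLp_apply]
    ring
  set vc : Fin k → Fin m → ℝ := fun i => v i.castSucc with hvc
  set K := Submodule.span ℝ (Set.range fun i : Fin k => eqv.symm (vc i)) with hK
  haveI : FiniteDimensional ℝ K := FiniteDimensional.span_of_finite ℝ (Set.finite_range _)
  set prj := Submodule.orthogonalProjection K (eqv.symm (v (Fin.last k))) with hprj
  obtain ⟨s, hs⟩ := Submodule.mem_span_range_iff_exists_fun ℝ |>.mp prj.2
  set p : Fin m → ℝ := eqv (prj : WithLp 2 (Fin m → ℝ)) with hp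
  have hpl : ∀ l, p l = ∑ i, s i * vc i l := by
    intro l
    rw [hp, ← hs, map_sum]
    have : ∀ i : Fin k, eqv (s i • eqv.symm (vc i)) = s i • vc i := by
      intro i; rw [_root_.map_smul, eqv.apply_symm_apply]
    rw [Finset.sum_congr rfl fun i _ => this i, Finset.sum_apply]
    simp
  set r : Fin m → ℝ := fun l => v (Fin.last k) l - p l with hr
  have hrE : eqv.symm r = eqv.symm (v (Fin.last k)) - (prj : WithLp 2 (Fin m → ℝ)) := by
    have : r = v (Fin.last k) - p := rfl
    rw [this, map_sub, hp, eqv.symm_apply_apply]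
  have hrK : eqv.symm r ∈ Kᗮ := by
    rw [hrE]; exact Submodule.sub_starProjection_mem_orthogonal (K := K) _
  have hortho : ∀ y : Fin m → ℝ, eqv.symm y ∈ K → ∑ l, y l * r l = 0 := by
    intro y hy
    rw [← hinner]
    exact (Submodule.mem_orthogonal K _).mp hrK _ hy
  have horthi : ∀ i : Fin k, ∑ l, vc i l * r l = 0 := by
    intro i
    exact hortho _ (Submodule.subset_span ⟨i, rfl⟩)
  refine ⟨r, ?_, ?_⟩
  · -- determinant identity
    set E : Matrix (Fin (k+1)) (Fin (k+1)) ℝ :=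
      Matrix.of (Fin.snoc (fun i : Fin k => fun i' : Fin (k+1) => if i' = i.castSucc then (1:ℝ) else 0)
        (Fin.snoc (fun i : Fin k => -(s i)) 1)) with hE
    have hEentry_c : ∀ (i0 : Fin k) (i' : Fin (k+1)),
        E i0.castSucc i' = if i' = i0.castSucc then 1 else 0 := by
      intro i0 i'
      rw [hE]
      simp [Fin.snoc_castSucc]
    have hEentry_l : ∀ i' : Fin (k+1),
        E (Fin.last k) i' = (Fin.snoc (fun i : Fin k => -(s i)) (1:ℝ) : Fin (k+1) → ℝ) i' := by
      intro i'
      rw [hE]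
      simp [Fin.snoc_last]
    have hEA : E * Matrix.of v = Matrix.of (Fin.snoc vc r) := by
      ext i l
      rw [Matrix.mul_apply]
      induction i using Fin.lastCases with
      | last =>
        rw [Fin.sum_univ_castSucc]
        simp only [hEentry_l, Fin.snoc_castSucc, Fin.snoc_last, Matrix.of_apply]
        have h5 : r l = v (Fin.last k) l - p l := rfl
        rw [h5, hpl l]
        have h6 : ∑ x : Fin k, -s x * v x.castSucc l = -∑ x : Fin k, s x * v x.castSucc l := by
          rw [← Finset.sum_neg_distrib]
          exact Finset.sum_congr rfl fun x _ => by ring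
        rw [h6]
        simp only [hvc]
        ring
      | cast i0 =>
        simp only [hEentry_c, Matrix.of_apply, Fin.snoc_castSucc]
        rw [Finset.sum_eq_single i0.castSucc]
        · simp; rfl
        · intro b _ hb; simp [hb]
        · intro h; exact absurd (Finset.mem_univ _) h
    have hdetE : E.det = 1 := by
      have htri : E.BlockTriangular OrderDual.toDual := by
        intro i j hij
        have hij' : i < j := hij
        induction i using Fin.lastCases with
        | last => exact absurd hij' (not_lt.mpr (Fin.le_last j))
        | cast i0 =>
          rw [hEentry_c]
          exact if_neg (fun h => absurd h.symm (ne_of_lt hij'))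
      rw [Matrix.det_of_lowerTriangular E htri]
      apply Finset.prod_eq_one
      intro i _
      induction i using Fin.lastCases with
      | last => rw [hEentry_l]; simp
      | cast i0 => rw [hEentry_c]; simp
    have hgram : (gmat (Fin.snoc vc r)).det = (gmat v).det := by
      rw [gmat_eq, gmat_eq, ← hEA, Matrix.transpose_mul]
      rw [show E * Matrix.of v * ((Matrix.of v)ᵀ * Eᵀ)
          = E * (Matrix.of v * (Matrix.of v)ᵀ) * Eᵀ by
        rw [← Matrix.mul_assoc, Matrix.mul_assoc E]]
      rw [Matrix.det_mul, Matrix.det_mul, Matrix.det_transpose, hdetE]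
      ring
    rw [← hgram]
    rw [Matrix.det_succ_row _ (Fin.last k)]
    rw [Finset.sum_eq_single (Fin.last k)]
    · have h1 : gmat (Fin.snoc vc r) (Fin.last k) (Fin.last k) = ∑ l, r l ^ 2 := by
        simp [gmat, Fin.snoc_last, sq]
      have h2 : ((gmat (Fin.snoc vc r)).submatrix (Fin.last k).succAbove
          (Fin.last k).succAbove) = gmat vc := by
        ext i i'
        simp [gmat, Matrix.submatrix_apply, Fin.succAbove_last, Fin.snoc_castSucc]
      rw [h1, h2]
      have h3 : ((-1 : ℝ)) ^ ((Fin.last k : ℕ) + (Fin.last k : ℕ)) = 1 := by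
        rw [Fin.val_last]
        have h4 : k + k = 2 * k := by ring
        rw [h4, pow_mul]
        norm_num
      rw [h3, one_mul]
    · intro j _ hj
      have hj' : ∃ j0 : Fin k, j = j0.castSucc := by
        rcases Fin.eq_castSucc_or_eq_last j with h | h
        · exact h
        · exact absurd h hj
      obtain ⟨j0, rfl⟩ := hj'
      have : gmat (Fin.snoc vc r) (Fin.last k) j0.castSucc = 0 := by
        have := horthi j0
        simp only [gmat, Matrix.of_apply, Fin.snoc_last, Fin.snoc_castSucc]
        rw [← this]
        exact Finset.sum_congr rfl fun l _ => mul_comm _ _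
      rw [this]
      ring
    · intro h; exact absurd (Finset.mem_univ _) h
  · -- minimality
    intro t
    set u : Fin m → ℝ := fun l => ∑ i, t i * vc i l with hu
    have huK : eqv.symm u ∈ K := by
      have : u = ∑ i, t i • vc i := by
        funext l
        rw [Finset.sum_apply]
        simp [hu]
      rw [this, map_sum]
      have : ∀ i : Fin k, eqv.symm (t i • vc i) = t i • eqv.symm (vc i) := fun i => by
        rw [_root_.map_smul]
      rw [Finset.sum_congr rfl fun i _ => this i]
      exact Submodule.sum_smul_mem K t (fun i _ => Submodule.subset_span ⟨i, rfl⟩)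
    have hpK : (prj : WithLp 2 (Fin m → ℝ)) ∈ K := prj.2
    have key : ∑ l, (v (Fin.last k) l - u l) ^ 2
        = ∑ l, r l ^ 2 + 2 * (inner ℝ (eqv.symm r) ((prj : WithLp 2 (Fin m → ℝ)) - eqv.symm u) : ℝ)
          + (inner ℝ ((prj : WithLp 2 (Fin m → ℝ)) - eqv.symm u) ((prj : WithLp 2 (Fin m → ℝ)) - eqv.symm u) : ℝ) := by
      have hdecomp : eqv.symm (fun l => v (Fin.last k) l - u l)
          = eqv.symm r + ((prj : WithLp 2 (Fin m → ℝ)) - eqv.symm u) := by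
        have h1 : (fun l => v (Fin.last k) l - u l) = (v (Fin.last k) - p) + (p - u) := by
          funext l; simp [hp]
        rw [h1, map_add, map_sub, map_sub]
        have hps : eqv.symm p = (prj : WithLp 2 (Fin m → ℝ)) := by rw [hp, eqv.symm_apply_apply]
        rw [hps, hrE]
      have h2 : ∑ l, (v (Fin.last k) l - u l) ^ 2
          = (inner ℝ (eqv.symm (fun l => v (Fin.last k) l - u l)) (eqv.symm (fun l => v (Fin.last k) l - u l)) : ℝ) := by
        rw [hinner]
        exact Finset.sum_congr rfl fun l _ => sq _
      have h3 : ∑ l, r l ^ 2 = (inner ℝ (eqv.symm r) (eqv.symm r) : ℝ) := by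
        rw [hinner]
        exact Finset.sum_congr rfl fun l _ => sq _
      rw [h2, h3, hdecomp]
      exact real_inner_add_add_self _ _
    rw [key]
    have hz : (inner ℝ (eqv.symm r) ((prj : WithLp 2 (Fin m → ℝ)) - eqv.symm u) : ℝ) = 0 := by
      rw [real_inner_comm]
      exact (Submodule.mem_orthogonal K _).mp hrK _ (Submodule.sub_mem K hpK huK)
    rw [hz]
    have := real_inner_self_nonneg (x := (prj : WithLp 2 (Fin m → ℝ)) - eqv.symm u)
    linarith

lemma cast_mem_span {km m : ℕ} {B : Fin km → Fin m → ℤ} {v : Fin m → ℤ}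
    (h : v ∈ Submodule.span ℤ (Set.range B)) :
    (fun l => (v l : ℝ)) ∈ Submodule.span ℝ (Set.range fun i => fun l => (B i l : ℝ)) := by
  induction h using Submodule.span_induction with
  | mem x hx =>
    obtain ⟨i, rfl⟩ := hx
    exact Submodule.subset_span ⟨i, rfl⟩
  | zero =>
    convert Submodule.zero_mem _ using 1
    funext l; simp
  | add x y hx hy ihx ihy =>
    convert Submodule.add_mem _ ihx ihy using 1
    funext l; push_cast; simp
  | smul cc x hx ih =>
    convert Submodule.smul_mem _ (cc : ℝ) ih using 1
    funext l; push_cast; simp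

lemma gram_det_nonneg {m : ℕ} : ∀ {k : ℕ} (v : Fin k → Fin m → ℝ), 0 ≤ (gmat v).det := by
  intro k
  induction k with
  | zero => intro v; simp [gmat, Matrix.det_fin_zero]
  | succ k ih =>
    intro v
    obtain ⟨r, heq, -⟩ := gram_step v
    rw [heq]
    exact mul_nonneg (Finset.sum_nonneg fun l _ => sq_nonneg _) (ih _)

theorem fundamental_volume_ratio_bound
    (d : ℕ) (α : Fin d → ℝ) (q : ℕ → ℕ) (a : ℕ → Fin d → ℤ)
    (hba : IsSimBestApproxVecs d α q a)
    (z : ℕ → Fin (d + 1) → ℝ)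
    (hz : ∀ ν, z ν = Fin.cons (q ν : ℝ) (fun j => (a ν j : ℝ)))
    -- the selected indices ν₁ = ν₀, ν₂ = ν₀ + 1, ν₃, …, ν_{d+1} (0-indexed by `n`):
    (ν₀ : ℕ) (n : ℕ → ℕ)
    (hn0 : n 0 = ν₀) (hn1 : n 1 = ν₀ + 1)
    (hsel : ∀ j : ℕ, 1 ≤ j → j < d →
      IsLeast {μ : ℕ | n j < μ ∧
          LinearIndependent ℝ (fun i : Fin (j + 2) =>
            if (i : ℕ) ≤ j then z (n i) else z μ)}
        (n (j + 1))) :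
    -- for every j = 1, …, d (here 0-indexed: `j < d`), and every pair of ℤ-bases
    -- of the lattices Γ_j = π_j ∩ ℤ^{d+1} and Γ_{j+1} = π_{j+1} ∩ ℤ^{d+1}:
    ∀ j : ℕ, j < d →
      ∀ B1 : Fin (j + 1) → Fin (d + 1) → ℤ, ∀ B2 : Fin (j + 2) → Fin (d + 1) → ℤ,
      (LinearIndependent ℤ B1 ∧
        (Submodule.span ℤ (Set.range B1) : Set (Fin (d + 1) → ℤ)) =
          {v : Fin (d + 1) → ℤ | (fun l => (v l : ℝ)) ∈
            Submodule.span ℝ (Set.range fun i : Fin (j + 1) => z (n i))}) →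
      (LinearIndependent ℤ B2 ∧
        (Submodule.span ℤ (Set.range B2) : Set (Fin (d + 1) → ℤ)) =
          {v : Fin (d + 1) → ℤ | (fun l => (v l : ℝ)) ∈
            Submodule.span ℝ (Set.range fun i : Fin (j + 2) => z (n i))}) →
      gramVol (fun i l => (B2 i l : ℝ)) / gramVol (fun i l => (B1 i l : ℝ)) ≤
        2 * Real.sqrt d * ((q (n (j + 1)) : ℝ) / (q (n (j + 1) - 1) : ℝ)) *
          simErr d α (q (n (j + 1) - 1)) := by
  classical
  obtain ⟨⟨hmono, hpos, hbest, -⟩, hnear⟩ := hba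
  intro j hj B1 B2 hB1 hB2
  obtain ⟨hB1i, hB1s⟩ := hB1
  obtain ⟨hB2i, hB2s⟩ := hB2
  have hd1 : 0 < d := Nat.lt_of_le_of_lt (Nat.zero_le j) hj
  haveI : Nonempty (Fin d) := ⟨⟨0, hd1⟩⟩
  set N := n (j + 1) with hN
  set πj := Submodule.span ℝ (Set.range fun i : Fin (j + 1) => z (n (i : ℕ))) with hπj
  set πj1 := Submodule.span ℝ (Set.range fun i : Fin (j + 2) => z (n (i : ℕ))) with hπj1
  have hbdd : ∀ qq : ℕ, BddAbove (Set.range fun i : Fin d => dist01 ((qq : ℝ) * α i)) :=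
    fun qq => Set.Finite.bddAbove (Set.finite_range _)
  have hd01 : ∀ ν (i : Fin d), |(q ν : ℝ) * α i - (a ν i : ℝ)| ≤ simErr d α (q ν) := by
    intro ν i; rw [hnear ν i]; exact le_ciSup (hbdd _) i
  have hd01nn : ∀ (qq : ℕ) (i : Fin d), (0:ℝ) ≤ dist01 ((qq : ℝ) * α i) :=
    fun qq i => abs_nonneg _
  have hsimnn : ∀ qq : ℕ, 0 ≤ simErr d α qq := by
    intro qq
    exact le_trans (hd01nn qq ⟨0, hd1⟩) (le_ciSup (hbdd qq) ⟨0, hd1⟩)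
  -- the key independence fact
  have H1 : LinearIndependent ℝ (fun i : Fin (j + 2) => z (n (i : ℕ))) := by
    rcases Nat.eq_zero_or_pos j with hj0 | hj1
    · -- j = 0 : pair independence
      subst hj0
      have hpair : LinearIndependent ℝ ![z (n 0), z (n 1)] := by
        rw [LinearIndependent.pair_iff]
        intro s t hst
        rw [hn0, hn1] at hst
        have h0 := congrFun hst 0
        have hq0 : (0:ℝ) < q ν₀ := by exact_mod_cast hpos ν₀
        have hq1 : (0:ℝ) < q (ν₀ + 1) := by exact_mod_cast hpos (ν₀ + 1)
        rw [hz ν₀, hz (ν₀ + 1)] at h0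
        simp only [Pi.add_apply, Pi.smul_apply, Fin.cons_zero, Pi.zero_apply,
          smul_eq_mul] at h0
        by_cases ht : t = 0
        · subst ht
          constructor
          · have : s * (q ν₀ : ℝ) = 0 := by linarith
            rcases mul_eq_zero.mp this with h | h
            · exact h
            · exact absurd h (ne_of_gt hq0)
          · rfl
        · exfalso
          -- z (ν₀+1) = c • z ν₀ with c = q(ν₀+1)/q(ν₀) ≥ 1
          have hc : ∀ l, z (ν₀ + 1) l = (-(s/t)) * z ν₀ l := by
            intro l
            have := congrFun hst l
            simp only [Pi.add_apply, Pi.smul_apply, Pi.zero_apply, smul_eq_mul] at this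
            field_simp
            linarith [this]
          have hcq : (q (ν₀ + 1) : ℝ) = (-(s/t)) * q ν₀ := by
            have := hc 0
            rw [hz ν₀, hz (ν₀ + 1)] at this
            simpa [Fin.cons_zero] using this
          have hcpos : (1:ℝ) ≤ (-(s/t)) := by
            have hlt : (q ν₀ : ℝ) < q (ν₀ + 1) := by
              exact_mod_cast hmono (Nat.lt_succ_self ν₀)
            nlinarith
          -- componentwise: dist01 at ν₀+1 dominates dist01 at ν₀
          have hdom : ∀ i : Fin d,
              dist01 ((q ν₀ : ℝ) * α i) ≤ dist01 ((q (ν₀ + 1) : ℝ) * α i) := by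
            intro i
            rw [← hnear ν₀ i, ← hnear (ν₀ + 1) i]
            have hca : (a (ν₀ + 1) i : ℝ) = (-(s/t)) * a ν₀ i := by
              have := hc i.succ
              rw [hz ν₀, hz (ν₀ + 1)] at this
              simpa [Fin.cons_succ] using this
            have : (q (ν₀ + 1) : ℝ) * α i - a (ν₀ + 1) i
                = (-(s/t)) * ((q ν₀ : ℝ) * α i - a ν₀ i) := by
              rw [hcq, hca]; ring
            rw [this, abs_mul, abs_of_nonneg (by linarith : (0:ℝ) ≤ -(s/t))]
            nlinarith [abs_nonneg ((q ν₀ : ℝ) * α i - a ν₀ i)]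
          have hsup : simErr d α (q ν₀) ≤ simErr d α (q (ν₀ + 1)) :=
            ciSup_mono (hbdd _) hdom
          have hlt : simErr d α (q (ν₀ + 1)) < simErr d α (q ν₀) :=
            hbest (ν₀ + 1) (q ν₀) (hpos ν₀) (hmono (Nat.lt_succ_self ν₀))
          linarith
      have hfam : (fun i : Fin (0 + 2) => z (n (i : ℕ))) = ![z (n 0), z (n 1)] := by
        funext i
        fin_cases i <;> simp
      rw [hfam]
      exact hpair
    · obtain ⟨⟨hltN, hliN⟩, hlbN⟩ := hsel j hj1 hj
      have hfam : (fun i : Fin (j + 2) => z (n (i : ℕ)))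
          = (fun i : Fin (j + 2) => if (i : ℕ) ≤ j then z (n i) else z N) := by
        funext i
        by_cases h : (i : ℕ) ≤ j
        · simp [h]
        · have hij : (i : ℕ) = j + 1 := by omega
          simp [h, hij, hN]
      rw [hfam]
      exact hliN
  have H1comp : LinearIndependent ℝ (fun i : Fin (j + 1) => z (n (i : ℕ))) := by
    have h := H1.comp Fin.castSucc (Fin.castSucc_injective _)
    convert h using 1
    funext i; simp
  have hsnocz : (fun i : Fin (j + 2) => z (n (i : ℕ)))
      = Fin.snoc (fun i : Fin (j + 1) => z (n (i : ℕ))) (z N) := by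
    funext i
    induction i using Fin.lastCases with
    | last => simp [Fin.snoc_last, hN]
    | cast i0 => simp [Fin.snoc_castSucc]
  have hN1 : 1 ≤ N := by
    rcases Nat.eq_zero_or_pos j with hj0 | hj1
    · subst hj0; rw [hN, hn1]; omega
    · obtain ⟨⟨hltN, -⟩, -⟩ := hsel j hj1 hj; omega
  have H2 : z (N - 1) ∈ πj := by
    rcases Nat.eq_zero_or_pos j with hj0 | hj1
    · subst hj0
      have : N - 1 = n 0 := by rw [hN, hn1, hn0]; omega
      rw [this, hπj]
      exact Submodule.subset_span ⟨(0 : Fin 1), by norm_num⟩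
    · obtain ⟨⟨hltN, hliN⟩, hlbN⟩ := hsel j hj1 hj
      rcases eq_or_lt_of_le (by omega : n j ≤ N - 1) with heq | hlt
      · rw [← heq, hπj]
        exact Submodule.subset_span ⟨Fin.last j, by simp⟩
      · by_contra hmem
        have hsnoc : LinearIndependent ℝ
            (Fin.snoc (fun i : Fin (j + 1) => z (n (i : ℕ))) (z (N - 1))) :=
          linearIndependent_fin_snoc.mpr ⟨H1comp, by rw [← hπj] at *; exact hmem⟩
        have hfam2 : (fun i : Fin (j + 2) => if (i : ℕ) ≤ j then z (n i) else z (N - 1))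
            = Fin.snoc (fun i : Fin (j + 1) => z (n (i : ℕ))) (z (N - 1)) := by
          funext i
          induction i using Fin.lastCases with
          | last => simp [Fin.snoc_last]
          | cast i0 =>
            have hle : (i0 : ℕ) ≤ j := Nat.lt_succ_iff.mp i0.isLt
            simp [Fin.snoc_castSucc, Fin.coe_castSucc, hle]
        have hmemS : (N - 1) ∈ {μ : ℕ | n j < μ ∧
            LinearIndependent ℝ (fun i : Fin (j + 2) =>
              if (i : ℕ) ≤ j then z (n i) else z μ)} := by
          refine ⟨hlt, ?_⟩
          rw [hfam2]
          exact hsnoc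
        have := hlbN hmemS
        omega
  -- cast bases
  set castB1 : Fin (j + 1) → Fin (d + 1) → ℝ := fun i l => (B1 i l : ℝ) with hcastB1
  set castB2 : Fin (j + 2) → Fin (d + 1) → ℝ := fun i l => (B2 i l : ℝ) with hcastB2
  set zInt : ℕ → Fin (d + 1) → ℤ := fun ν => Fin.cons (q ν : ℤ) (a ν) with hzInt
  have hzc : ∀ ν, (fun l => ((zInt ν l : ℤ) : ℝ)) = z ν := by
    intro ν
    funext l
    rw [hz ν]
    refine Fin.cases ?_ ?_ l
    · simp [hzInt, Fin.cons_zero]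
    · intro i; simp [hzInt, Fin.cons_succ]
  have hmem1 : ∀ v : Fin (d + 1) → ℤ,
      v ∈ Submodule.span ℤ (Set.range B1) ↔ (fun l => (v l : ℝ)) ∈ πj := by
    intro v
    have := Set.ext_iff.mp hB1s v
    exact this
  have hmem2 : ∀ v : Fin (d + 1) → ℤ,
      v ∈ Submodule.span ℤ (Set.range B2) ↔ (fun l => (v l : ℝ)) ∈ πj1 := by
    intro v
    have := Set.ext_iff.mp hB2s v
    exact this
  have hspan1 : Submodule.span ℝ (Set.range castB1) = πj := by
    apply le_antisymm
    · rw [Submodule.span_le]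
      rintro _ ⟨i, rfl⟩
      exact (hmem1 (B1 i)).mp (Submodule.subset_span ⟨i, rfl⟩)
    · rw [hπj, Submodule.span_le]
      rintro _ ⟨i, rfl⟩
      have h0 : (fun l => ((zInt (n (i : ℕ)) l : ℤ) : ℝ)) ∈ πj := by
        rw [hzc]
        exact Submodule.subset_span ⟨i, rfl⟩
      have h1 : zInt (n (i : ℕ)) ∈ Submodule.span ℤ (Set.range B1) := (hmem1 _).mpr h0
      have h2 := cast_mem_span h1
      have h3 := hzc (n (i : ℕ))
      show z (n (i : ℕ)) ∈ (Submodule.span ℝ (Set.range castB1) : Set _)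
      rw [← h3]
      exact h2
  have hπle : πj ≤ πj1 := by
    rw [hπj, Submodule.span_le]
    rintro _ ⟨i, rfl⟩
    exact Submodule.subset_span ⟨i.castSucc, by simp⟩
  have hspan2 : Submodule.span ℝ (Set.range castB2) = πj1 := by
    apply le_antisymm
    · rw [Submodule.span_le]
      rintro _ ⟨i, rfl⟩
      exact (hmem2 (B2 i)).mp (Submodule.subset_span ⟨i, rfl⟩)
    · rw [hπj1, Submodule.span_le]
      rintro _ ⟨i, rfl⟩
      have h0 : (fun l => ((zInt (n (i : ℕ)) l : ℤ) : ℝ)) ∈ πj1 := by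
        rw [hzc]
        exact Submodule.subset_span ⟨i, rfl⟩
      have h1 : zInt (n (i : ℕ)) ∈ Submodule.span ℤ (Set.range B2) := (hmem2 _).mpr h0
      have h2 := cast_mem_span h1
      have h3 := hzc (n (i : ℕ))
      show z (n (i : ℕ)) ∈ (Submodule.span ℝ (Set.range castB2) : Set _)
      rw [← h3]
      exact h2
  -- linear independence of cast bases over ℝ
  have hli1R : LinearIndependent ℝ castB1 := by
    rw [linearIndependent_iff_card_eq_finrank_span]
    have : Set.finrank ℝ (Set.range castB1)
        = Module.finrank ℝ (Submodule.span ℝ (Set.range castB1)) := rfl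
    rw [this, hspan1, hπj, finrank_span_eq_card H1comp]
  have hli2R : LinearIndependent ℝ castB2 := by
    rw [linearIndependent_iff_card_eq_finrank_span]
    have : Set.finrank ℝ (Set.range castB2)
        = Module.finrank ℝ (Submodule.span ℝ (Set.range castB2)) := rfl
    rw [this, hspan2, hπj1, finrank_span_eq_card H1]
  -- A = B1 rows together with z N
  set A : Fin (j + 2) → Fin (d + 1) → ℝ := Fin.snoc castB1 (z N) with hA
  have hwnot : z N ∉ πj := by
    rw [hsnocz] at H1
    have := (linearIndependent_fin_snoc.mp H1).2
    rw [hπj]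
    exact this
  have hAli : LinearIndependent ℝ A :=
    linearIndependent_fin_snoc.mpr ⟨hli1R, by rw [hspan1]; exact hwnot⟩
  set AInt : Fin (j + 2) → Fin (d + 1) → ℤ := Fin.snoc B1 (zInt N) with hAInt
  have hAcast : ∀ i l, A i l = (AInt i l : ℝ) := by
    intro i l
    induction i using Fin.lastCases with
    | last =>
      rw [hA, hAInt]
      simp only [Fin.snoc_last]
      exact (congrFun (hzc N) l).symm
    | cast i0 =>
      rw [hA, hAInt]
      simp only [Fin.snoc_castSucc]
      rfl
  have hAmem : ∀ i, AInt i ∈ Submodule.span ℤ (Set.range B2) := by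
    intro i
    apply (hmem2 _).mpr
    induction i using Fin.lastCases with
    | last =>
      rw [hAInt]
      simp only [Fin.snoc_last]
      rw [hzc N]
      rw [hπj1]
      exact Submodule.subset_span ⟨Fin.last (j + 1), by simp [hN]⟩
    | cast i0 =>
      rw [hAInt]
      simp only [Fin.snoc_castSucc]
      apply hπle
      rw [← hspan1]
      exact Submodule.subset_span ⟨i0, rfl⟩
  choose M hM using fun i => (Submodule.mem_span_range_iff_exists_fun ℤ).mp (hAmem i)
  set MInt : Matrix (Fin (j + 2)) (Fin (j + 2)) ℤ := Matrix.of M with hMInt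
  set Mc : Matrix (Fin (j + 2)) (Fin (j + 2)) ℝ := MInt.map (Int.cast) with hMc
  have hofA : Matrix.of A = Mc * Matrix.of castB2 := by
    ext i l
    rw [Matrix.mul_apply]
    rw [Matrix.of_apply, hAcast i l, ← hM i]
    rw [Finset.sum_apply]
    push_cast
    apply Finset.sum_congr rfl
    intro p _
    simp [hMc, hMInt, Matrix.map_apply, smul_eq_mul, hcastB2]
  have hgmA : (gmat A).det = Mc.det ^ 2 * (gmat castB2).det := by
    rw [gmat_eq A, hofA, Matrix.transpose_mul]
    rw [show Mc * Matrix.of castB2 * ((Matrix.of castB2)ᵀ * Mcᵀ)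
        = Mc * (Matrix.of castB2 * (Matrix.of castB2)ᵀ) * Mcᵀ by
      rw [← Matrix.mul_assoc, Matrix.mul_assoc Mc]]
    rw [Matrix.det_mul, Matrix.det_mul, Matrix.det_transpose, ← gmat_eq]
    ring
  have hMdet : Mc.det ≠ 0 := by
    intro h0
    obtain ⟨x, hx0, hx⟩ := Matrix.exists_vecMul_eq_zero_iff.mpr h0
    have hxA : Matrix.vecMul x (Matrix.of A) = 0 := by
      rw [hofA, ← Matrix.vecMul_vecMul, hx, Matrix.zero_vecMul]
    apply hx0
    funext i
    have hsum0 : ∑ i, x i • A i = 0 := by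
      funext l
      have := congrFun hxA l
      rw [Finset.sum_apply]
      simpa [Matrix.vecMul, dotProduct] using this
    exact Fintype.linearIndependent_iff.mp hAli x hsum0 i
  have h1leM : 1 ≤ Mc.det ^ 2 := by
    have hdet_cast : Mc.det = ((MInt.det : ℤ) : ℝ) := by
      have hMM : Mc = (Int.castRingHom ℝ).mapMatrix MInt := rfl
      rw [hMM, ← RingHom.map_det]
      simp
    have hMInt0 : MInt.det ≠ 0 := by
      intro h
      apply hMdet
      rw [hdet_cast, h]
      simp
    have h1 : 1 ≤ |MInt.det| := Int.one_le_abs hMInt0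
    have h2 : (1 : ℤ) ≤ MInt.det ^ 2 := by nlinarith [sq_abs MInt.det]
    rw [hdet_cast]
    exact_mod_cast (by push_cast; exact_mod_cast h2 : (1:ℝ) ≤ ((MInt.det ^ 2 : ℤ) : ℝ))
  have chain1 : (gmat castB2).det ≤ (gmat A).det := by
    rw [hgmA]
    exact le_mul_of_one_le_left (gram_det_nonneg _) h1leM
  -- gram_step on A
  obtain ⟨r, hrdet, hrmin⟩ := gram_step A
  have hAc : (fun i : Fin (j + 1) => A i.castSucc) = castB1 := by
    funext i
    rw [hA, Fin.snoc_castSucc]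
  have hAlast : A (Fin.last (j + 1)) = z N := by rw [hA, Fin.snoc_last]
  rw [hAc] at hrdet
  -- coefficients of z (N-1) in castB1
  have hzμ : z (N - 1) ∈ Submodule.span ℝ (Set.range castB1) := by
    rw [hspan1]; exact H2
  obtain ⟨t0, ht0⟩ := (Submodule.mem_span_range_iff_exists_fun ℝ).mp hzμ
  set c : ℝ := (q N : ℝ) / (q (N - 1) : ℝ) with hc
  set ξ : ℝ := simErr d α (q (N - 1)) with hξ
  have hmin := hrmin (fun i => c * t0 i)
  have hq'pos : (0:ℝ) < (q (N - 1) : ℝ) := by exact_mod_cast hpos (N - 1)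
  have hμlt : N - 1 < N := by omega
  have hqlt : (q (N - 1) : ℝ) < (q N : ℝ) := by exact_mod_cast hmono hμlt
  have hc1 : 1 ≤ c := by
    rw [hc, le_div_iff₀ hq'pos]
    linarith
  have hc0 : 0 ≤ c := by linarith
  have hξN : simErr d α (q N) ≤ ξ :=
    le_of_lt (hbest N (q (N - 1)) (hpos _) (hmono hμlt))
  have hξ0 : 0 ≤ ξ := hsimnn _
  have hAce : ∀ (i : Fin (j + 1)) (l : Fin (d + 1)), A i.castSucc l = castB1 i l := by
    intro i l
    rw [hA, Fin.snoc_castSucc]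
  have hsumc : ∀ l, ∑ i, (c * t0 i) * A i.castSucc l = c * z (N - 1) l := by
    intro l
    have hl := congrFun ht0 l
    rw [Finset.sum_apply] at hl
    calc ∑ i, (c * t0 i) * A i.castSucc l = c * ∑ i, t0 i * castB1 i l := by
          rw [Finset.mul_sum]
          exact Finset.sum_congr rfl fun i _ => by rw [hAce]; ring
      _ = c * z (N - 1) l := by
          rw [show ∑ i, t0 i * castB1 i l = z (N - 1) l from by
            rw [← hl]; exact Finset.sum_congr rfl fun i _ => by simp [smul_eq_mul]]
  have hS : ∑ l, (z N l - c * z (N - 1) l) ^ 2 ≤ (d : ℝ) * (2 * c * ξ) ^ 2 := by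
    rw [Fin.sum_univ_succ]
    have h0 : z N 0 - c * z (N - 1) 0 = 0 := by
      rw [hz N, hz (N - 1)]
      simp only [Fin.cons_zero]
      rw [hc, div_mul_cancel₀ _ (ne_of_gt hq'pos), sub_self]
    rw [h0]
    have hterm : ∀ i : Fin d, (z N i.succ - c * z (N - 1) i.succ) ^ 2 ≤ (2 * c * ξ) ^ 2 := by
      intro i
      have e1 : z N i.succ = (a N i : ℝ) := by rw [hz N]; simp [Fin.cons_succ]
      have e2 : z (N - 1) i.succ = (a (N - 1) i : ℝ) := by rw [hz (N - 1)]; simp [Fin.cons_succ]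
      have hb1 : |(q N : ℝ) * α i - a N i| ≤ ξ := le_trans (hd01 N i) hξN
      have hb2 : |(q (N - 1) : ℝ) * α i - a (N - 1) i| ≤ ξ := hd01 (N - 1) i
      have key : |z N i.succ - c * z (N - 1) i.succ| ≤ 2 * c * ξ := by
        rw [e1, e2]
        have hrw : (a N i : ℝ) - c * a (N - 1) i
            = -((q N : ℝ) * α i - a N i) + c * ((q (N - 1) : ℝ) * α i - a (N - 1) i) := by
          have hcc : c * (q (N - 1) : ℝ) = (q N : ℝ) := by
            rw [hc, div_mul_cancel₀ _ (ne_of_gt hq'pos)]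
          linear_combination (-(α i)) * hcc
        rw [hrw]
        calc |-((q N : ℝ) * α i - a N i) + c * ((q (N - 1) : ℝ) * α i - a (N - 1) i)|
            ≤ |-((q N : ℝ) * α i - a N i)| + |c * ((q (N - 1) : ℝ) * α i - a (N - 1) i)| :=
              abs_add_le _ _
          _ = |(q N : ℝ) * α i - a N i| + c * |(q (N - 1) : ℝ) * α i - a (N - 1) i| := by
              rw [abs_neg, abs_mul, abs_of_nonneg hc0]
          _ ≤ ξ + c * ξ := by
              have := mul_le_mul_of_nonneg_left hb2 hc0
              linarith
          _ ≤ 2 * c * ξ := by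
              have h2 : 1 * ξ ≤ c * ξ := mul_le_mul_of_nonneg_right hc1 hξ0
              linarith
      calc (z N i.succ - c * z (N - 1) i.succ) ^ 2
          = |z N i.succ - c * z (N - 1) i.succ| ^ 2 := (sq_abs _).symm
        _ ≤ (2 * c * ξ) ^ 2 := by
            apply pow_le_pow_left₀ (abs_nonneg _) key
    have hsum_le : ∑ i : Fin d, (z N i.succ - c * z (N - 1) i.succ) ^ 2
        ≤ (d : ℝ) * (2 * c * ξ) ^ 2 := by
      calc ∑ i : Fin d, (z N i.succ - c * z (N - 1) i.succ) ^ 2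
          ≤ ∑ _i : Fin d, (2 * c * ξ) ^ 2 := Finset.sum_le_sum fun i _ => hterm i
        _ = (d : ℝ) * (2 * c * ξ) ^ 2 := by
            rw [Finset.sum_const, Finset.card_univ, Fintype.card_fin, nsmul_eq_mul]
    simpa using hsum_le
  set ρ : ℝ := 2 * Real.sqrt d * c * ξ with hρ
  have hρ0 : 0 ≤ ρ := by
    rw [hρ]
    exact mul_nonneg (mul_nonneg (mul_nonneg (by norm_num) (Real.sqrt_nonneg _)) hc0) hξ0
  have hρsq : (d : ℝ) * (2 * c * ξ) ^ 2 = ρ ^ 2 := by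
    rw [hρ]
    have hh : Real.sqrt (d : ℝ) ^ 2 = (d : ℝ) := Real.sq_sqrt (Nat.cast_nonneg d)
    linear_combination (-(2 * c * ξ) ^ 2) * hh
  have chain2 : (gmat A).det ≤ ρ ^ 2 * (gmat castB1).det := by
    rw [hrdet]
    apply mul_le_mul_of_nonneg_right ?_ (gram_det_nonneg _)
    calc ∑ l, r l ^ 2
        ≤ ∑ l, (A (Fin.last (j + 1)) l - ∑ i, (c * t0 i) * A i.castSucc l) ^ 2 := hmin
      _ = ∑ l, (z N l - c * z (N - 1) l) ^ 2 := by
          apply Finset.sum_congr rfl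
          intro l _
          rw [hAlast, hsumc l]
      _ ≤ (d : ℝ) * (2 * c * ξ) ^ 2 := hS
      _ = ρ ^ 2 := hρsq
  have chainF : (gmat castB2).det ≤ ρ ^ 2 * (gmat castB1).det := le_trans chain1 chain2
  -- convert to gramVol
  have hdet1pos : 0 < (gmat castB1).det :=
    lt_of_le_of_ne (gram_det_nonneg _) (Ne.symm (gram_det_ne_zero_of_li hli1R))
  have hgv1 : gramVol (fun i l => ((B1 i l : ℤ) : ℝ)) = Real.sqrt (gmat castB1).det := rfl
  have hgv2 : gramVol (fun i l => ((B2 i l : ℤ) : ℝ)) = Real.sqrt (gmat castB2).det := rfl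
  rw [hgv1, hgv2]
  rw [div_le_iff₀ (Real.sqrt_pos.mpr hdet1pos)]
  calc Real.sqrt (gmat castB2).det
      ≤ Real.sqrt (ρ ^ 2 * (gmat castB1).det) := Real.sqrt_le_sqrt chainF
    _ = ρ * Real.sqrt (gmat castB1).det := by
        rw [Real.sqrt_mul (sq_nonneg ρ), Real.sqrt_sq hρ0]
    _ = 2 * Real.sqrt d * ((q N : ℝ) / (q (N - 1) : ℝ)) * simErr d α (q (N - 1))
          * Real.sqrt (gmat castB1).det := by rw [hρ, hc, hξ]
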